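/- Let N ≥ 2 be an integer, let R > N, and fix x ∈ ℝ^N with ‖x‖ < R. Define v_p(x) = (1/N)^{1/(p−1)} · ((p−1)/p) · ( R^{p/(p−1)} − ‖x‖^{p/(p−1)} ). Then v_p(x) tends to +∞ as p → 1^+. -/

import Mathlib

open Filter Real

lemma aux_exp_div (a : ℝ) (ha : 1 < a) :
    Tendsto (fun s : ℝ => a ^ s / s) atTop atTop := by
  have hla : 0 < Real.log a := Real.log_pos ha
  have h1 : Tendsto (fun s : ℝ => Real.log a * s) atTop atTop :=
    Tendsto.const_mul_atTop hla tendsto_id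
  have h2 : Tendsto (fun u : ℝ => Real.exp u / u) atTop atTop := by
    simpa using Real.tendsto_exp_div_pow_atTop 1
  have h3 := (h2.comp h1).const_mul_atTop hla
  apply h3.congr'
  filter_upwards [eventually_gt_atTop 0] with s hs
  have ha0 : 0 < a := lt_trans one_pos ha
  rw [Real.rpow_def_of_pos ha0, Function.comp]
  field_simp

theorem torsion_solution_blowup (N : ℕ) (hN : 2 ≤ N) (R : ℝ) (hR : (N : ℝ) < R)
    (x : EuclideanSpace ℝ (Fin N)) (hx : ‖x‖ < R) :
    Filter.Tendsto
      (fun p : ℝ => (1 / N) ^ (1 / (p - 1)) * ((p - 1) / p) *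
        (R ^ (p / (p - 1)) - ‖x‖ ^ (p / (p - 1))))
      (nhdsWithin 1 (Set.Ioi 1)) Filter.atTop := by
  have hN0 : (0:ℝ) < N := by
    have : (2:ℝ) ≤ N := by exact_mod_cast hN
    linarith
  set a : ℝ := R / N with ha_def
  have ha : 1 < a := (one_lt_div hN0).2 hR
  have hR0 : 0 < R := lt_trans hN0 hR
  have hx0 : 0 ≤ ‖x‖ := norm_nonneg x
  have hc : (0:ℝ) < (R - ‖x‖) / 2 := by linarith
  have hs : Tendsto (fun p : ℝ => 1/(p-1)) (nhdsWithin 1 (Set.Ioi 1)) atTop := by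
    have h1 : Tendsto (fun p : ℝ => p - 1) (nhdsWithin 1 (Set.Ioi 1))
        (nhdsWithin 0 (Set.Ioi 0)) := by
      apply tendsto_nhdsWithin_of_tendsto_nhds_of_eventually_within
      · have h0 : Tendsto (fun p : ℝ => p - 1) (nhds 1) (nhds 0) := by
          have := (continuous_sub_right (1:ℝ)).tendsto 1
          simpa using this
        exact h0.mono_left nhdsWithin_le_nhds
      · filter_upwards [self_mem_nhdsWithin] with p hp
        exact sub_pos.2 (Set.mem_Ioi.mp hp)
    simpa [one_div, Function.comp_def] using tendsto_inv_nhdsGT_zero.comp h1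
  have hg : Tendsto (fun p : ℝ => (p-1) * a ^ (1/(p-1)))
      (nhdsWithin 1 (Set.Ioi 1)) atTop := by
    have h := (aux_exp_div a ha).comp hs
    apply h.congr'
    filter_upwards [self_mem_nhdsWithin] with p hp
    have hp1 : (0:ℝ) < p - 1 := sub_pos.2 hp
    rw [Function.comp]
    rw [one_div, div_inv_eq_mul, mul_comm]
  have hG : Tendsto (fun p : ℝ => (R-‖x‖)/2 * ((p-1) * a ^ (1/(p-1))))
      (nhdsWithin 1 (Set.Ioi 1)) atTop := hg.const_mul_atTop hc
  apply tendsto_atTop_mono' _ _ hG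
  have hmem : Set.Ioo (1:ℝ) 2 ∈ nhdsWithin (1:ℝ) (Set.Ioi 1) :=
    Ioo_mem_nhdsGT_of_mem ⟨le_refl 1, one_lt_two⟩
  filter_upwards [hmem] with p hp
  obtain ⟨hp1, hp2⟩ := hp
  have hp1' : (0:ℝ) < p - 1 := sub_pos.2 hp1
  set t : ℝ := 1 / (p - 1) with ht_def
  have ht : 0 < t := by positivity
  have hpt : p / (p - 1) = 1 + t := by
    field_simp [ht_def]
    rw [ht_def, mul_add, mul_one, mul_one_div_cancel hp1'.ne']; ring
  rw [hpt]
  have hRsplit : R ^ (1 + t) = R * R ^ t := by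
    rw [Real.rpow_add hR0, Real.rpow_one]
  have hxle : ‖x‖ ^ (1 + t) ≤ ‖x‖ * R ^ t := by
    rw [Real.rpow_add' hx0 (by positivity : (1:ℝ) + t ≠ 0), Real.rpow_one]
    exact mul_le_mul_of_nonneg_left (Real.rpow_le_rpow hx0 hx.le ht.le) hx0
  have hmul : (1 / (N:ℝ)) ^ t * R ^ t = a ^ t := by
    rw [← Real.mul_rpow (by positivity) hR0.le]
    congr 1
    field_simp [ha_def]
    rw [ha_def]; field_simp
  have hat : 0 < a ^ t := Real.rpow_pos_of_pos (by linarith) t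
  have hNt : 0 < (1 / (N:ℝ)) ^ t := Real.rpow_pos_of_pos (by positivity) t
  have hRt : 0 < R ^ t := Real.rpow_pos_of_pos hR0 t
  have key : (1 / (N:ℝ)) ^ t * ((p - 1) / p) * (R ^ (1 + t) - ‖x‖ ^ (1 + t))
      ≥ (R - ‖x‖) * ((p - 1) / p) * a ^ t := by
    have h1 : R ^ (1 + t) - ‖x‖ ^ (1 + t) ≥ (R - ‖x‖) * R ^ t := by
      rw [hRsplit]; nlinarith
    have hpp : 0 < (p - 1) / p := by positivity
    calc (1 / (N:ℝ)) ^ t * ((p - 1) / p) * (R ^ (1 + t) - ‖x‖ ^ (1 + t))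
        ≥ (1 / (N:ℝ)) ^ t * ((p - 1) / p) * ((R - ‖x‖) * R ^ t) := by
          apply mul_le_mul_of_nonneg_left h1 (by positivity)
      _ = (R - ‖x‖) * ((p - 1) / p) * ((1 / (N:ℝ)) ^ t * R ^ t) := by ring
      _ = (R - ‖x‖) * ((p - 1) / p) * a ^ t := by rw [hmul]
  have hfrac : (p - 1) / 2 ≤ (p - 1) / p := by
    apply div_le_div_of_nonneg_left hp1'.le (by linarith) hp2.le
  calc (R - ‖x‖) / 2 * ((p - 1) * a ^ t)
      = (R - ‖x‖) * ((p - 1) / 2) * a ^ t := by ring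
    _ ≤ (R - ‖x‖) * ((p - 1) / p) * a ^ t := by
        apply mul_le_mul_of_nonneg_right _ hat.le
        exact mul_le_mul_of_nonneg_left hfrac (by linarith)
    _ ≤ _ := key
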